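/- Let k be a field and R = RCFM(k). With A the shift matrix and B the matrix with b_{n(n+1)/2+i,(n-1)n/2+i}=1 (n>0, 0≤i<n) and 0 otherwise, one has R = R·(I − B) + A·R, i.e., every row-column-finite matrix decomposes as a sum of an element of the right ideal R(I−B) and an element of the left ideal AR. -/

import Mathlib

open scoped Classical

/-- A matrix is row-column finite if every row and every column has finitely many
nonzero entries. -/
def RCF {k : Type*} [Field k] (M : ℕ → ℕ → k) : Prop :=
  (∀ i, {j | M i j ≠ 0}.Finite) ∧ (∀ j, {i | M i j ≠ 0}.Finite)

/-- The shift matrix `A` over `k`: `a_{i+1,i} = 1` and all other entries `0`. -/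
def shiftA (k : Type*) [Field k] : ℕ → ℕ → k := fun i j => if i = j + 1 then 1 else 0

/-- The matrix `B` over `k`: `b_{n(n+1)/2 + i, (n-1)n/2 + i} = 1` for `n > 0`, `0 ≤ i < n`,
and all other entries `0`. -/
noncomputable def matB (k : Type*) [Field k] : ℕ → ℕ → k := fun p q =>
  if ∃ n : ℕ, 0 < n ∧ ∃ i : ℕ, i < n ∧ p = n * (n + 1) / 2 + i ∧ q = (n - 1) * n / 2 + i
  then 1 else 0

/-- The identity `ℕ×ℕ` matrix over `k`. -/
def idMat (k : Type*) [Field k] : ℕ → ℕ → k := fun i j => if i = j then 1 else 0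

/-- Product of `ℕ×ℕ` matrices, defined entrywise by the (finite) sums. -/
noncomputable def matMul {k : Type*} [Field k] (M N : ℕ → ℕ → k) : ℕ → ℕ → k :=
  fun i j => ∑ᶠ l, M i l * N l j

private def T (n : ℕ) : ℕ := n * (n + 1) / 2

private lemma T_succ (m : ℕ) : T m + (m + 1) = T (m + 1) := by
  have h1 : m * (m + 1) / 2 * 2 = m * (m + 1) :=
    Nat.div_mul_cancel (Nat.even_mul_succ_self m).two_dvd
  have h2 : (m + 1) * (m + 2) / 2 * 2 = (m + 1) * (m + 2) :=
    Nat.div_mul_cancel (Nat.even_mul_succ_self (m + 1)).two_dvd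
  have h3 : (m + 1) * (m + 2) = m * (m + 1) + 2 * (m + 1) := by ring
  show m * (m + 1) / 2 + (m + 1) = (m + 1) * (m + 2) / 2
  omega

private lemma T_mono : Monotone T := by
  intro a b h
  exact Nat.div_le_div_right (Nat.mul_le_mul h (by omega))

private lemma exists_lt_T (q : ℕ) : ∃ n, q < T n := by
  refine ⟨q + 1, ?_⟩
  have := T_succ q
  have : T q + (q + 1) = T (q + 1) := this
  omega

private noncomputable def nIdx (q : ℕ) : ℕ := Nat.find (exists_lt_T q)

private lemma nIdx_pos (q : ℕ) : 0 < nIdx q := by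
  rcases Nat.eq_zero_or_pos (nIdx q) with h | h
  · have := Nat.find_spec (exists_lt_T q)
    rw [show Nat.find (exists_lt_T q) = nIdx q from rfl, h] at this
    simp [T] at this
  · exact h

private lemma lt_T_nIdx (q : ℕ) : q < T (nIdx q) := Nat.find_spec (exists_lt_T q)

private lemma T_pred_le (q : ℕ) : T (nIdx q - 1) ≤ q := by
  by_contra h
  have hpos := nIdx_pos q
  have hlt : nIdx q - 1 < nIdx q := by omega
  have hmin := Nat.find_min (exists_lt_T q) hlt
  exact hmin (by omega)

private noncomputable def fB (q : ℕ) : ℕ := q + nIdx q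

private lemma lt_fB (q : ℕ) : q < fB q := by
  have := nIdx_pos q; simp [fB]; omega

private lemma le_iter_fB (m q : ℕ) : q + m ≤ fB^[m] q := by
  induction m generalizing q with
  | zero => simp
  | succ n ih =>
    rw [Function.iterate_succ_apply]
    have h1 := lt_fB q
    have := ih (fB q)
    omega

private lemma matB_eq (k : Type*) [Field k] (p q : ℕ) :
    matB k p q = if p = fB q then (1 : k) else 0 := by
  have key : (∃ n : ℕ, 0 < n ∧ ∃ i : ℕ, i < n ∧ p = n * (n + 1) / 2 + i ∧
      q = (n - 1) * n / 2 + i) ↔ p = fB q := by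
    constructor
    · rintro ⟨n, hn, i, hi, hp, hq⟩
      obtain ⟨m, rfl⟩ : ∃ m, n = m + 1 := ⟨n - 1, by omega⟩
      have hq' : q = T m + i := by simpa [T] using hq
      have hp' : p = T (m + 1) + i := by simpa [T] using hp
      have hTs := T_succ m
      have hlt : q < T (m + 1) := by omega
      have hle : T m ≤ q := by omega
      have hfind : nIdx q = m + 1 := by
        rw [nIdx, Nat.find_eq_iff]
        refine ⟨hlt, fun n' hn' => ?_⟩
        have : T n' ≤ T m := T_mono (by omega)
        omega
      simp only [fB, hfind]; omega
    · intro hp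
      have h1 := nIdx_pos q
      obtain ⟨m, hm⟩ : ∃ m, nIdx q = m + 1 := ⟨nIdx q - 1, by omega⟩
      have hle : T m ≤ q := by have := T_pred_le q; rw [hm] at this; simpa using this
      have hlt : q < T (m + 1) := by have := lt_T_nIdx q; rwa [hm] at this
      have hTs := T_succ m
      refine ⟨m + 1, by omega, q - T m, by omega, ?_, ?_⟩
      · simp only [fB, hm] at hp
        show p = T (m + 1) + (q - T m)
        omega
      · show q = T m + (q - T m)
        omega
  rw [matB]
  by_cases h : p = fB q
  · rw [if_pos (key.mpr h), if_pos h]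
  · rw [if_neg (fun hc => h (key.mp hc)), if_neg h]

theorem RCFM_main (k : Type*) [Field k] :
    ∀ P : ℕ → ℕ → k, RCF P →
      ∃ X Y : ℕ → ℕ → k, RCF X ∧ RCF Y ∧
        P = matMul X (idMat k - matB k) + matMul (shiftA k) Y := by
  intro P hP
  -- bound for the support of row 0
  obtain ⟨N, hN⟩ : ∃ N : ℕ, ∀ j, N ≤ j → P 0 j = 0 := by
    obtain ⟨b, hb⟩ := (hP.1 0).bddAbove
    refine ⟨b + 1, fun j hj => ?_⟩
    by_contra hne
    exact absurd (hb (Set.mem_setOf.mpr hne)) (by omega)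
  set x : ℕ → k := fun q => ∑ m ∈ Finset.range N, P 0 (fB^[m] q) with hx
  set X : ℕ → ℕ → k := fun i j => if i = 0 then x j else 0 with hX
  set Y : ℕ → ℕ → k := fun i j => P (i + 1) j with hY
  have hxzero : ∀ q, N ≤ q → x q = 0 := by
    intro q hq
    apply Finset.sum_eq_zero
    intro m _
    exact hN _ (le_trans (le_trans hq (Nat.le_add_right q m)) (le_iter_fB m q))
  refine ⟨X, Y, ⟨?_, ?_⟩, ⟨?_, ?_⟩, ?_⟩
  · -- rows of X finite
    intro i
    apply Set.Finite.subset (Finset.range N).finite_toSet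
    intro j hj
    simp only [Set.mem_setOf_eq, hX] at hj
    by_contra hjr
    have hjN : N ≤ j := by simpa [Finset.mem_range, not_lt] using hjr
    apply hj
    split
    · exact hxzero j hjN
    · rfl
  · -- columns of X finite
    intro j
    apply Set.Finite.subset (Set.finite_singleton 0)
    intro i hi
    simp only [Set.mem_setOf_eq, hX] at hi
    by_contra h0
    simp only [Set.mem_singleton_iff] at h0
    exact hi (by simp [h0])
  · -- rows of Y finite
    intro i
    exact hP.1 (i + 1)
  · -- columns of Y finite
    intro j
    have : {i | Y i j ≠ 0} = (fun i => i + 1) ⁻¹' {l | P l j ≠ 0} := rfl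
    rw [this]
    exact Set.Finite.preimage (Function.Injective.injOn (add_left_injective 1)) (hP.2 j)
  · -- the matrix identity
    funext i j
    have hAY : matMul (shiftA k) Y i j = (if i = 0 then 0 else P i j) := by
      rcases i with _ | s
      · simp only [if_pos rfl, matMul]
        apply finsum_eq_zero_of_forall_eq_zero
        intro l
        simp [shiftA]
      · simp only [Nat.succ_ne_zero, if_neg]
        rw [matMul, finsum_eq_single _ s]
        · simp [shiftA, hY]
        · intro l hl
          have : s + 1 ≠ l + 1 := by omega
          simp [shiftA, this, Ne.symm hl]
    have hXB : matMul X (idMat k - matB k) i j =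
        (if i = 0 then x j - x (fB j) else 0) := by
      rcases i with _ | s
      · simp only [if_pos rfl, matMul]
        have hsupp : (Function.support fun l => X 0 l * (idMat k - matB k) l j)
            ⊆ (({j, fB j} : Finset ℕ) : Set ℕ) := by
          intro l hl
          simp only [Function.mem_support] at hl
          simp only [Finset.coe_insert, Finset.coe_singleton, Set.mem_insert_iff,
            Set.mem_singleton_iff]
          by_contra hc
          push_neg at hc
          apply hl
          have h1 : idMat k l j = 0 := by simp [idMat, hc.1]
          have h2 : matB k l j = 0 := by rw [matB_eq]; simp [hc.2]
          simp [Pi.sub_apply, h1, h2]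
        rw [finsum_eq_finset_sum_of_support_subset _ hsupp,
          Finset.sum_pair (Nat.ne_of_lt (lt_fB j))]
        have hj1 : idMat k j j = 1 := by simp [idMat]
        have hj2 : matB k j j = 0 := by rw [matB_eq]; simp [Nat.ne_of_lt (lt_fB j)]
        have hf1 : idMat k (fB j) j = 0 := by simp [idMat, (Nat.ne_of_lt (lt_fB j)).symm]
        have hf2 : matB k (fB j) j = 1 := by rw [matB_eq]; simp
        simp only [Pi.sub_apply, hj1, hj2, hf1, hf2, hX, eq_self_iff_true, if_true]
        ring
      · simp only [Nat.succ_ne_zero, if_neg, matMul]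
        apply finsum_eq_zero_of_forall_eq_zero
        intro l
        simp [hX]
    have htel : x j - x (fB j) = P 0 j := by
      have h1 : x (fB j) = ∑ m ∈ Finset.range N, P 0 (fB^[m + 1] j) := by
        rw [hx]
        apply Finset.sum_congr rfl
        intro m _
        rw [Function.iterate_succ_apply]
      have h2 : ∑ m ∈ Finset.range (N + 1), P 0 (fB^[m] j)
          = (∑ m ∈ Finset.range N, P 0 (fB^[m + 1] j)) + P 0 (fB^[0] j) :=
        Finset.sum_range_succ' _ N
      have h3 : ∑ m ∈ Finset.range (N + 1), P 0 (fB^[m] j)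
          = (∑ m ∈ Finset.range N, P 0 (fB^[m] j)) + P 0 (fB^[N] j) :=
        Finset.sum_range_succ _ N
      have h4 : P 0 (fB^[N] j) = 0 := hN _ (le_trans (Nat.le_add_left N j) (le_iter_fB N j))
      have h5 : fB^[0] j = j := rfl
      rw [hx] at *
      rw [h1]
      rw [h4] at h3
      rw [h5] at h2
      rw [h3] at h2
      linear_combination h2
    simp only [Pi.add_apply]
    rw [hAY, hXB]
    rcases i with _ | s
    · simpa using htel.symm
    · simp

/-- `RCFM(k) = RCFM(k)·(I−B) + A·RCFM(k)`: every row-column-finite matrix is a sum of an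
element of the right ideal `R(I−B)` and an element of the left ideal `AR`. -/
theorem RCFM_eq_right_ideal_add_left_ideal (k : Type*) [Field k] :
    ∀ P : ℕ → ℕ → k, RCF P →
      ∃ X Y : ℕ → ℕ → k, RCF X ∧ RCF Y ∧
        P = matMul X (idMat k - matB k) + matMul (shiftA k) Y :=
  RCFM_main k
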